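/- Let 0 ≤ r ≤ n−2 and let u ∈ E_n^{(r)}. Write u = x v with x ∈ X_n^{(r+2)} and v ∈ W_{r+2}. Then v ∈ E_{r+2}^{(r)}. -/

import Mathlib

/-!
Common setup: the Weyl group `W n` of type `B_n`, realized as the group of
permutations `w` of `I_n = {±1, …, ±n}` (inside `Equiv.Perm ℤ`, fixing every
integer of absolute value `> n`) such that `w (-i) = - w i` for all `i`.
-/

namespace TypeB

/-- The generator `t = (1, -1)`. -/
def t : Equiv.Perm ℤ := Equiv.swap 1 (-1)

/-- The generator `s i = (i, i+1)(-i, -(i+1))` (meaningful for `1 ≤ i`). -/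
def s (i : ℕ) : Equiv.Perm ℤ :=
  Equiv.swap (i : ℤ) ((i : ℤ) + 1) * Equiv.swap (-(i : ℤ)) (-((i : ℤ) + 1))

/-- The generating set `S_n = {t, s_1, …, s_{n-1}}`. -/
def gens (n : ℕ) : Set (Equiv.Perm ℤ) :=
  {t} ∪ {x | ∃ i : ℕ, 1 ≤ i ∧ i < n ∧ x = s i}

/-- The Weyl group `W_n` of type `B_n`, as a subgroup of `Equiv.Perm ℤ`:
permutations `w` with `w (-i) = - (w i)` for all `i` and fixing all `i` with `|i| > n`. -/
def W (n : ℕ) : Subgroup (Equiv.Perm ℤ) where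
  carrier := {w | (∀ i : ℤ, w (-i) = - w i) ∧ ∀ i : ℤ, (n : ℤ) < |i| → w i = i}
  one_mem' := ⟨fun _ => rfl, fun _ _ => rfl⟩
  mul_mem' := by
    rintro u v ⟨hu1, hu2⟩ ⟨hv1, hv2⟩
    refine ⟨fun i => ?_, fun i hi => ?_⟩
    · simp only [Equiv.Perm.mul_apply, hv1, hu1]
    · simp only [Equiv.Perm.mul_apply, hv2 i hi, hu2 i hi]
  inv_mem' := by
    rintro u ⟨hu1, hu2⟩
    refine ⟨fun i => ?_, fun i hi => ?_⟩
    · apply u.injective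
      rw [(fun y => (Equiv.eq_symm_apply u).mp rfl : ∀ y, u (u⁻¹ y) = y), hu1, (fun y => (Equiv.eq_symm_apply u).mp rfl : ∀ y, u (u⁻¹ y) = y)]
    · apply u.injective
      rw [(fun y => (Equiv.eq_symm_apply u).mp rfl : ∀ y, u (u⁻¹ y) = y), hu2 i hi]

/-- The length of `w` with respect to the generating set `S_n`. -/
noncomputable def len (n : ℕ) (w : Equiv.Perm ℤ) : ℕ :=
  sInf {k | ∃ l : List (Equiv.Perm ℤ), (∀ x ∈ l, x ∈ gens n) ∧ l.prod = w ∧ l.length = k}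

/-- `l` is a reduced expression for `w` with respect to `S_n`. -/
def IsReduced (n : ℕ) (w : Equiv.Perm ℤ) (l : List (Equiv.Perm ℤ)) : Prop :=
  (∀ x ∈ l, x ∈ gens n) ∧ l.prod = w ∧ l.length = len n w

/-- `ℓ_t w`: the number of occurrences of `t` in a reduced expression of `w`
(independent of the chosen reduced expression). -/
noncomputable def lent (n : ℕ) (w : Equiv.Perm ℤ) : ℕ :=
  letI : DecidableEq (Equiv.Perm ℤ) := Classical.decEq _
  sInf {m | ∃ l, IsReduced n w l ∧ l.count t = m}

/-- `r 1 = t` and `r (i+1) = s i * r i`. -/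
def r : ℕ → Equiv.Perm ℤ
  | 0 => 1
  | 1 => t
  | (i + 2) => s (i + 1) * r (i + 1)

/-- `t_1 = t` and `t_{i+1} = s_i * t_i * s_i`. -/
def tperm : ℕ → Equiv.Perm ℤ
  | 0 => 1
  | 1 => t
  | (i + 2) => s (i + 1) * tperm (i + 1) * s (i + 1)

/-- `a l = r 1 * r 2 * ⋯ * r l`, with `a 0 = 1`. -/
def a : ℕ → Equiv.Perm ℤ
  | 0 => 1
  | (l + 1) => a l * r (l + 1)

/-- The symmetric group `𝔖_n`: the subgroup generated by `s_1, …, s_{n-1}`. -/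
def Sym (n : ℕ) : Subgroup (Equiv.Perm ℤ) :=
  Subgroup.closure {x | ∃ i : ℕ, 1 ≤ i ∧ i < n ∧ x = s i}

/-- The parabolic subgroup `𝔖_{l,n-l}`: generated by `{s_1, …, s_{n-1}} \ {s_l}`. -/
def SymP (n l : ℕ) : Subgroup (Equiv.Perm ℤ) :=
  Subgroup.closure {x | ∃ i : ℕ, 1 ≤ i ∧ i < n ∧ i ≠ l ∧ x = s i}

/-- `Y_{l,n-l}`: elements of `𝔖_n` of minimal length in their coset `w 𝔖_{l,n-l}`. -/
def Y (n l : ℕ) : Set (Equiv.Perm ℤ) :=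
  {w | w ∈ Sym n ∧ ∀ u ∈ SymP n l, len n w ≤ len n (w * u)}

/-- The subgroup `𝔖_{[i,j]}` generated by `s_i, …, s_{j-1}`. -/
def SymI (i j : ℕ) : Subgroup (Equiv.Perm ℤ) :=
  Subgroup.closure {x | ∃ k : ℕ, i ≤ k ∧ k < j ∧ x = s k}

/-- The function reversing the interval `[i,j]` (and `[-j,-i]`), for `1 ≤ i`. -/
def revFun (i j : ℤ) : ℤ → ℤ := fun k =>
  if 1 ≤ i ∧ i ≤ k ∧ k ≤ j then i + j - k
  else if 1 ≤ i ∧ -j ≤ k ∧ k ≤ -i then -(i + j) - k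
  else k

lemma revFun_involutive (i j : ℤ) : Function.Involutive (revFun i j) := by
  intro k
  unfold revFun
  split_ifs <;> omega

/-- `σ_{[i,j]}`: the longest element of `𝔖_{[i,j]}`, i.e. the order-reversing
permutation of the interval `[i,j]` (extended to `I_n` by `w(-k) = -w(k)`). -/
def sigmaI (i j : ℕ) : Equiv.Perm ℤ := (revFun_involutive (i : ℤ) (j : ℤ)).toPerm

/-- `σ_{l,n-l}`: the longest element of `𝔖_{l,n-l} = 𝔖_{[1,l]} × 𝔖_{[l+1,n]}`. -/
def sigmaLL (n l : ℕ) : Equiv.Perm ℤ := sigmaI 1 l * sigmaI (l + 1) n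

/-- The function negating all `k` with `|k| ≤ n`. -/
def negnFun (n : ℤ) : ℤ → ℤ := fun k => if -n ≤ k ∧ k ≤ n then -k else k

lemma negnFun_involutive (n : ℤ) : Function.Involutive (negnFun n) := by
  intro k
  unfold negnFun
  split_ifs <;> omega

/-- `w_n`: the longest element of `W_n`; as a permutation, `w_n i = -i` for `|i| ≤ n`. -/
def wlong (n : ℕ) : Equiv.Perm ℤ := (negnFun_involutive (n : ℤ)).toPerm

/-- `c_I = s_{i_1} s_{i_2} ⋯ s_{i_k}` for `I = {i_1 < i_2 < ⋯ < i_k}`. -/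
def cElt (I : Finset ℕ) : Equiv.Perm ℤ := ((I.sort (· ≤ ·)).map s).prod

/-- `d_I = s_{i_k} ⋯ s_{i_2} s_{i_1}` for `I = {i_1 < i_2 < ⋯ < i_k}`. -/
def dElt (I : Finset ℕ) : Equiv.Perm ℤ := (((I.sort (· ≤ ·)).map s).reverse).prod

/-- `X_n^{(m)}`: elements of `W_n` of minimal length in their coset `w W_m`. -/
def X (n m : ℕ) : Set (Equiv.Perm ℤ) :=
  {w | w ∈ W n ∧ ∀ u ∈ W m, len n w ≤ len n (w * u)}

/-- Bruhat order: `x ≤ y` iff some reduced expression of `y` contains a subword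
which is a reduced expression of `x`. -/
def BruhatLE (n : ℕ) (x y : Equiv.Perm ℤ) : Prop :=
  ∃ ly, IsReduced n y ly ∧ ∃ lx, lx.Sublist ly ∧ IsReduced n x lx

/-- Strict Bruhat order. -/
def BruhatLT (n : ℕ) (x y : Equiv.Perm ℤ) : Prop := BruhatLE n x y ∧ x ≠ y

/-- `D_i(W_n)`: the set of `x` such that exactly one of `s_i, s_{i+1}` is a
(right) descent of `x`. -/
def Dset (n i : ℕ) : Set (Equiv.Perm ℤ) :=
  {x | Xor' (len n (x * s i) < len n x) (len n (x * s (i + 1)) < len n x)}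

open Classical in
/-- `γ_i x`: the unique element of `{x s_i, x s_{i+1}} ∩ D_i(W_n)` (for `x ∈ D_i(W_n)`). -/
noncomputable def gamma (n i : ℕ) (x : Equiv.Perm ℤ) : Equiv.Perm ℤ :=
  if x * s i ∈ Dset n i then x * s i else x * s (i + 1)

/-- `E_m^{(r)}`: the set of `w ∈ W_m` such that `|w 1| > |w i|` for `2 ≤ i ≤ r+2`
and `(w 2, …, w (r+2))` is a shuffle of a positive decreasing sequence and a
negative increasing sequence. -/
def E (m ρ : ℕ) : Set (Equiv.Perm ℤ) :=
  {w | w ∈ W m ∧ (∀ i : ℕ, 2 ≤ i → i ≤ ρ + 2 → |w (i : ℤ)| < |w (1 : ℤ)|) ∧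
    ∀ i j : ℕ, 2 ≤ i → i < j → j ≤ ρ + 2 →
      (0 < w (i : ℤ) → 0 < w (j : ℤ) → w (j : ℤ) < w (i : ℤ)) ∧
      (w (i : ℤ) < 0 → w (j : ℤ) < 0 → w (i : ℤ) < w (j : ℤ))}

/-- The product `r_{i_1} ⋯ r_{i_l}` for a sequence `i : Fin l → ℕ`. -/
def prodR {l : ℕ} (i : Fin l → ℕ) : Equiv.Perm ℤ := (List.ofFn fun k => r (i k)).prod

/-- `(l, α, β, σ)` is a decomposition of `w` as in the decomposition lemma:
`l ≤ n`, `α, β ∈ Y_{l,n-l}`, `σ ∈ 𝔖_{l,n-l}` and `w = α a_l σ β⁻¹`. -/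
def IsDecomp (n : ℕ) (w : Equiv.Perm ℤ) (l : ℕ) (α β σ : Equiv.Perm ℤ) : Prop :=
  l ≤ n ∧ α ∈ Y n l ∧ β ∈ Y n l ∧ σ ∈ SymP n l ∧ w = α * a l * σ * β⁻¹



/-! ### Auxiliary development for stmt18 -/

section Aux

lemma t_apply' (k : ℤ) : t k = if k = 1 then -1 else if k = -1 then 1 else k :=
  Equiv.swap_apply_def 1 (-1) k

lemma s_apply' (i : ℕ) (hi : 1 ≤ i) : ∀ k : ℤ, s i k =
    if k = (i:ℤ) then (i:ℤ)+1 else if k = (i:ℤ)+1 then (i:ℤ)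
    else if k = -(i:ℤ) then -((i:ℤ)+1) else if k = -((i:ℤ)+1) then -(i:ℤ) else k := by
  intro k
  have hi' : (1:ℤ) ≤ i := by exact_mod_cast hi
  simp only [s, Equiv.Perm.mul_apply, Equiv.swap_apply_def]
  split_ifs <;> omega

lemma t_mem (m : ℕ) (hm : 1 ≤ m) : t ∈ W m := by
  have hm' : (1:ℤ) ≤ m := by exact_mod_cast hm
  constructor
  · intro k; rw [t_apply', t_apply']; split_ifs <;> omega
  · intro k hk; rw [lt_abs] at hk; rw [t_apply']; split_ifs <;> omega

lemma s_mem (m i : ℕ) (hi : 1 ≤ i) (him : i < m) : s i ∈ W m := by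
  have h1 : (1:ℤ) ≤ i := by exact_mod_cast hi
  have h2 : (i:ℤ) < m := by exact_mod_cast him
  constructor
  · intro k; rw [s_apply' i hi, s_apply' i hi]; split_ifs <;> omega
  · intro k hk; rw [lt_abs] at hk; rw [s_apply' i hi]; split_ifs <;> omega

lemma gens_subset_W (n : ℕ) (hn : 1 ≤ n) : gens n ⊆ (W n : Set (Equiv.Perm ℤ)) := by
  rintro g (hg | ⟨i, hi1, hi2, rfl⟩)
  · rcases hg with rfl
    exact t_mem n hn
  · exact s_mem n i hi1 hi2

variable {n : ℕ} {w : Equiv.Perm ℤ}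

lemma w_zero (hw : w ∈ W n) : w 0 = 0 := by
  have h := hw.1 0; simp only [neg_zero] at h; omega

lemma w_ne_zero (hw : w ∈ W n) {k : ℤ} (hk : k ≠ 0) : w k ≠ 0 := by
  intro h
  exact hk (w.injective (h.trans (w_zero hw).symm))

lemma w_abs_le (hw : w ∈ W n) {k : ℤ} (hk : |k| ≤ n) : |w k| ≤ n := by
  by_contra h
  push_neg at h
  have h2 := hw.2 (w k) h
  have h3 := w.injective h2
  rw [h3] at h
  omega

lemma W_le {m : ℕ} (hmn : m ≤ n) : W m ≤ W n := by
  rintro u ⟨h1, h2⟩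
  exact ⟨h1, fun i hi => h2 i (lt_of_le_of_lt (by exact_mod_cast hmn) hi)⟩

/-- inversion statistic -/
noncomputable def inv2 (n : ℕ) (w : Equiv.Perm ℤ) : ℕ :=
  ∑ i ∈ Finset.Icc (1:ℤ) n, ∑ j ∈ Finset.Icc (1:ℤ) n, if i < j ∧ w j < w i then 1 else 0

/-- negative-sum statistic -/
noncomputable def nsum (n : ℕ) (w : Equiv.Perm ℤ) : ℕ :=
  ∑ i ∈ Finset.Icc (1:ℤ) n, (-(w i)).toNat

/-- the combinatorial length of a signed permutation -/
noncomputable def LB (n : ℕ) (w : Equiv.Perm ℤ) : ℕ := inv2 n w + nsum n w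

lemma inv2_one : inv2 n 1 = 0 :=
  Finset.sum_eq_zero fun i _ => Finset.sum_eq_zero fun j _ => by
    simp only [Equiv.Perm.one_apply]
    split_ifs with h
    · omega
    · exact if_neg h

lemma nsum_one : nsum n 1 = 0 :=
  Finset.sum_eq_zero fun i hi => by
    simp only [Finset.mem_Icc] at hi
    simp only [Equiv.Perm.one_apply]
    omega

lemma LB_one : LB n 1 = 0 := by rw [LB, inv2_one, nsum_one]

lemma card_abs_lt (hw : w ∈ W n) {a : ℤ} (ha : 1 ≤ a) (han : a ≤ n) :
    ((Finset.Icc (1:ℤ) n).filter fun j => |w j| < a).card = (a - 1).toNat := by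
  have hcard : (a - 1).toNat = (Finset.Icc (1:ℤ) (a-1)).card := by
    rw [Int.card_Icc]; congr 1; ring
  rw [hcard]
  apply Finset.card_bij (fun j _ => |w j|)
  · intro j hj
    simp only [Finset.mem_filter, Finset.mem_Icc] at hj ⊢
    have := w_ne_zero hw (k := j) (by omega)
    rcases abs_cases (w j) with ⟨h,_⟩|⟨h,_⟩ <;> omega
  · intro j1 h1 j2 h2 heq
    simp only [Finset.mem_filter, Finset.mem_Icc] at h1 h2
    rcases abs_eq_abs.1 heq with h | h
    · exact w.injective h
    · have : w j1 = w (-j2) := by rw [hw.1]; omega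
      have := w.injective this
      omega
  · intro b hb
    simp only [Finset.mem_Icc] at hb
    have hwi : w⁻¹ ∈ W n := (W n).inv_mem hw
    have h1 : w⁻¹ b ≠ 0 := w_ne_zero hwi (by omega)
    have h2 : |w⁻¹ b| ≤ (n:ℤ) :=
      w_abs_le hwi (by rw [abs_of_pos (show (0:ℤ) < b by omega)]; omega)
    have key : |w (|w⁻¹ b|)| = b := by
      rcases abs_choice (w⁻¹ b) with h | h
      · rw [h, (fun y => (Equiv.eq_symm_apply w).mp rfl : ∀ y, w (w⁻¹ y) = y), abs_of_pos (by omega)]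
      · rw [h, show -w⁻¹ b = -(w⁻¹ b) from rfl, hw.1, (fun y => (Equiv.eq_symm_apply w).mp rfl : ∀ y, w (w⁻¹ y) = y), abs_neg,
          abs_of_pos (by omega)]
    refine ⟨|w⁻¹ b|, ?_, key⟩
    simp only [Finset.mem_filter, Finset.mem_Icc]
    refine ⟨⟨?_, h2⟩, by rw [key]; omega⟩
    rcases abs_cases (w⁻¹ b) with ⟨h,_⟩|⟨h,_⟩ <;> omega

lemma s_invol (i : ℕ) (hi : 1 ≤ i) (k : ℤ) : s i (s i k) = k := by
  have hi' : (1:ℤ) ≤ i := by exact_mod_cast hi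
  simp only [s_apply' i hi]
  split_ifs <;> omega

lemma s_sq (i : ℕ) (hi : 1 ≤ i) : s i * s i = 1 :=
  Equiv.ext fun k => s_invol i hi k

lemma t_sq : t * t = 1 := Equiv.swap_mul_self _ _

lemma s_mem_Icc_iff (i : ℕ) (hi : 1 ≤ i) (hin : i < n) (k : ℤ) :
    k ∈ Finset.Icc (1:ℤ) n ↔ s i k ∈ Finset.Icc (1:ℤ) n := by
  have hi' : (1:ℤ) ≤ i := by exact_mod_cast hi
  have hin' : (i:ℤ) < n := by exact_mod_cast hin
  simp only [Finset.mem_Icc, s_apply' i hi]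
  split_ifs <;> omega

lemma nsum_mul_s (i : ℕ) (hi : 1 ≤ i) (hin : i < n) :
    nsum n (w * s i) = nsum n w := by
  unfold nsum
  refine Finset.sum_equiv (s i) (s_mem_Icc_iff i hi hin) ?_
  intro k _
  rfl

lemma inv2_mul_s (i : ℕ) (hi : 1 ≤ i) (hin : i < n) :
    inv2 n (w * s i) + (if w ((i:ℤ)+1) < w (i:ℤ) then 1 else 0)
      = inv2 n w + (if w (i:ℤ) < w ((i:ℤ)+1) then 1 else 0) := by
  have hi' : (1:ℤ) ≤ i := by exact_mod_cast hi
  have hin' : (i:ℤ) < n := by exact_mod_cast hin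
  have e1 : s i (i:ℤ) = (i:ℤ)+1 := by rw [s_apply' i hi]; split_ifs <;> omega
  have e2 : s i ((i:ℤ)+1) = (i:ℤ) := by rw [s_apply' i hi]; split_ifs <;> omega
  set T : Finset (ℤ × ℤ) := Finset.Icc (1:ℤ) n ×ˢ Finset.Icc (1:ℤ) n with hT
  have conv : ∀ u : Equiv.Perm ℤ,
      inv2 n u = ∑ p ∈ T, if p.1 < p.2 ∧ u p.2 < u p.1 then 1 else 0 := by
    intro u
    rw [hT, Finset.sum_product]
    rfl
  have step1 : inv2 n (w * s i)
      = ∑ p ∈ T, if s i p.1 < s i p.2 ∧ w p.2 < w p.1 then 1 else 0 := by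
    rw [conv]
    refine Finset.sum_equiv (Equiv.prodCongr (s i) (s i)) ?_ ?_
    · intro p
      simp only [hT, Finset.mem_product, Equiv.prodCongr_apply, Prod.map]
      rw [← s_mem_Icc_iff i hi hin, ← s_mem_Icc_iff i hi hin]
    · intro p _
      simp only [Equiv.prodCongr_apply, Prod.map, Equiv.Perm.mul_apply, s_invol i hi]
      exact if_congr Iff.rfl rfl rfl
  rw [step1, conv w]
  set p₁ : ℤ × ℤ := ((i:ℤ), (i:ℤ)+1) with hp₁
  set p₂ : ℤ × ℤ := ((i:ℤ)+1, (i:ℤ)) with hp₂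
  have hp₁T : p₁ ∈ T := by
    simp only [hT, hp₁, Finset.mem_product, Finset.mem_Icc]
    omega
  have hp₂T : p₂ ∈ T := by
    simp only [hT, hp₂, Finset.mem_product, Finset.mem_Icc]
    omega
  have hne : p₁ ≠ p₂ := by simp only [ne_eq, hp₁, hp₂, Prod.mk.injEq]; omega
  have hp₂e : p₂ ∈ T.erase p₁ := Finset.mem_erase.2 ⟨Ne.symm hne, hp₂T⟩
  have peel : ∀ f : ℤ × ℤ → ℕ,
      ∑ p ∈ T, f p = f p₁ + f p₂ + ∑ p ∈ (T.erase p₁).erase p₂, f p := by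
    intro f
    rw [← Finset.add_sum_erase _ f hp₁T, ← Finset.add_sum_erase _ f hp₂e, add_assoc]
  rw [peel, peel]
  have hcore : ∑ p ∈ (T.erase p₁).erase p₂,
        (if s i p.1 < s i p.2 ∧ w p.2 < w p.1 then 1 else 0)
      = ∑ p ∈ (T.erase p₁).erase p₂, (if p.1 < p.2 ∧ w p.2 < w p.1 then (1:ℕ) else 0) := by
    refine Finset.sum_congr rfl ?_
    intro p hp
    simp only [ne_eq, Finset.mem_erase, hT, Finset.mem_product, Finset.mem_Icc, hp₁, hp₂,
      Prod.ext_iff] at hp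
    have hiff : (s i p.1 < s i p.2) ↔ (p.1 < p.2) := by
      simp only [s_apply' i hi]
      split_ifs <;> omega
    exact if_congr (and_congr_left fun _ => hiff) rfl rfl
  rw [hcore]
  have v1 : (if s i p₁.1 < s i p₁.2 ∧ w p₁.2 < w p₁.1 then (1:ℕ) else 0) = 0 := by
    simp only [hp₁, e1, e2]
    rw [if_neg]
    omega
  have v2 : (if s i p₂.1 < s i p₂.2 ∧ w p₂.2 < w p₂.1 then (1:ℕ) else 0)
      = if w (i:ℤ) < w ((i:ℤ)+1) then 1 else 0 := by
    simp only [hp₂, e1, e2]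
    exact if_congr (by constructor <;> [exact fun h => h.2; exact fun h => ⟨by omega, h⟩]) rfl rfl
  have v3 : (if p₁.1 < p₁.2 ∧ w p₁.2 < w p₁.1 then (1:ℕ) else 0)
      = if w ((i:ℤ)+1) < w (i:ℤ) then 1 else 0 := by
    simp only [hp₁]
    exact if_congr (by constructor <;> [exact fun h => h.2; exact fun h => ⟨by omega, h⟩]) rfl rfl
  have v4 : (if p₂.1 < p₂.2 ∧ w p₂.2 < w p₂.1 then (1:ℕ) else 0) = 0 := by
    simp only [hp₂]
    rw [if_neg]
    omega
  rw [v1, v2, v3, v4]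
  omega

lemma nsum_mul_t (hn : 1 ≤ n) (hw : w ∈ W n) :
    nsum n (w * t) + (-(w 1)).toNat = nsum n w + (w 1).toNat := by
  unfold nsum
  have h1 : (1:ℤ) ∈ Finset.Icc (1:ℤ) n := by
    simp only [Finset.mem_Icc]
    exact ⟨le_refl _, by exact_mod_cast hn⟩
  rw [← Finset.add_sum_erase _ (fun k => (-((w * t) k)).toNat) h1,
    ← Finset.add_sum_erase _ (fun k => (-(w k)).toNat) h1]
  have hcore : ∑ k ∈ (Finset.Icc (1:ℤ) n).erase 1, (-((w * t) k)).toNat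
      = ∑ k ∈ (Finset.Icc (1:ℤ) n).erase 1, (-(w k)).toNat := by
    refine Finset.sum_congr rfl fun k hk => ?_
    simp only [Finset.mem_erase, Finset.mem_Icc] at hk
    have htk : t k = k := by rw [t_apply']; split_ifs <;> omega
    simp only [Equiv.Perm.mul_apply, htk]
  rw [hcore]
  have hwt1 : (w * t) 1 = -(w 1) := by
    have ht1 : t 1 = -1 := by rw [t_apply']; simp
    rw [Equiv.Perm.mul_apply, ht1]
    exact hw.1 1
  rw [hwt1]
  omega

lemma inv2_mul_t (hn : 1 ≤ n) (hw : w ∈ W n) :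
    inv2 n (w * t) + (∑ j ∈ Finset.Icc (1:ℤ) n, if 1 < j ∧ w j < w 1 then 1 else 0)
      = inv2 n w + (∑ j ∈ Finset.Icc (1:ℤ) n, if 1 < j ∧ w j < -(w 1) then 1 else 0) := by
  unfold inv2
  have h1 : (1:ℤ) ∈ Finset.Icc (1:ℤ) n := by
    simp only [Finset.mem_Icc]
    exact ⟨le_refl _, by exact_mod_cast hn⟩
  rw [← Finset.add_sum_erase _
      (fun i => ∑ j ∈ Finset.Icc (1:ℤ) n, if i < j ∧ (w * t) j < (w * t) i then 1 else 0) h1,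
    ← Finset.add_sum_erase _
      (fun i => ∑ j ∈ Finset.Icc (1:ℤ) n, if i < j ∧ w j < w i then 1 else 0) h1]
  have hwt1 : (w * t) 1 = -(w 1) := by
    have ht1 : t 1 = -1 := by rw [t_apply']; simp
    rw [Equiv.Perm.mul_apply, ht1]
    exact hw.1 1
  have hcore : ∑ i ∈ (Finset.Icc (1:ℤ) n).erase 1,
        (∑ j ∈ Finset.Icc (1:ℤ) n, if i < j ∧ (w * t) j < (w * t) i then 1 else 0)
      = ∑ i ∈ (Finset.Icc (1:ℤ) n).erase 1,
        (∑ j ∈ Finset.Icc (1:ℤ) n, if i < j ∧ w j < w i then 1 else 0) := by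
    refine Finset.sum_congr rfl fun i hi => ?_
    simp only [Finset.mem_erase, Finset.mem_Icc] at hi
    have hti : t i = i := by rw [t_apply']; split_ifs <;> omega
    refine Finset.sum_congr rfl fun j hj => ?_
    simp only [Finset.mem_Icc] at hj
    by_cases hj1 : j = 1
    · subst hj1
      rw [if_neg (by omega), if_neg (by omega)]
    · have htj : t j = j := by rw [t_apply']; split_ifs <;> omega
      simp only [Equiv.Perm.mul_apply, hti, htj]
  rw [hcore]
  have hrow : ∑ j ∈ Finset.Icc (1:ℤ) n, (if 1 < j ∧ (w * t) j < (w * t) 1 then (1:ℕ) else 0)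
      = ∑ j ∈ Finset.Icc (1:ℤ) n, (if 1 < j ∧ w j < -(w 1) then (1:ℕ) else 0) := by
    refine Finset.sum_congr rfl fun j hj => ?_
    simp only [Finset.mem_Icc] at hj
    by_cases hj1 : j = 1
    · subst hj1
      rw [if_neg (by omega), if_neg (by omega)]
    · have htj : t j = j := by rw [t_apply']; split_ifs <;> omega
      simp only [Equiv.Perm.mul_apply, htj, hwt1]
  have hrow2 : ∑ j ∈ Finset.Icc (1:ℤ) n, (if 1 < j ∧ w j < w 1 then (1:ℕ) else 0)
      = ∑ j ∈ Finset.Icc (1:ℤ) n, (if 1 < j ∧ w j < w 1 then (1:ℕ) else 0) := rfl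
  rw [hrow]
  omega

lemma csplit (hn : 1 ≤ n) (hw : w ∈ W n) {b : ℤ} (hb : b = |w 1|) :
    (∑ j ∈ Finset.Icc (1:ℤ) n, if 1 < j ∧ w j < b then (1:ℕ) else 0)
      = (∑ j ∈ Finset.Icc (1:ℤ) n, if 1 < j ∧ w j < -b then (1:ℕ) else 0)
        + (b - 1).toNat := by
  have hw1 : w 1 ≠ 0 := w_ne_zero hw one_ne_zero
  have hb1 : 1 ≤ b := by rcases abs_cases (w 1) with ⟨h,_⟩|⟨h,_⟩ <;> omega
  have hbn : b ≤ (n:ℤ) := by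
    have := w_abs_le hw (k := 1) (by rw [abs_one]; exact_mod_cast hn)
    omega
  rw [← card_abs_lt hw hb1 hbn, Finset.card_filter, ← Finset.sum_add_distrib]
  refine Finset.sum_congr rfl fun j hj => ?_
  simp only [Finset.mem_Icc] at hj
  by_cases hj1 : j = 1
  · subst hj1
    rw [if_neg (by omega), if_neg (by omega), if_neg (by omega)]
  · have hne1 : w j ≠ b := by
      intro h
      rcases abs_choice (w 1) with h' | h'
      · exact hj1 (w.injective (by omega))
      · have h2 : w j = w (-1) := by rw [hw.1]; omega
        have := w.injective h2
        omega
    have hne2 : w j ≠ -b := by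
      intro h
      rcases abs_choice (w 1) with h' | h'
      · have h2 : w j = w (-1) := by rw [hw.1]; omega
        have := w.injective h2
        omega
      · exact hj1 (w.injective (by omega))
    rcases abs_cases (w j) with ⟨h,_⟩|⟨h,_⟩ <;> split_ifs <;> omega

lemma LB_mul_t_pos (hn : 1 ≤ n) (hw : w ∈ W n) (h : 0 < w 1) :
    LB n (w * t) = LB n w + 1 := by
  have h1 := inv2_mul_t hn hw
  have h2 := nsum_mul_t hn hw
  have h3 := csplit hn hw (b := w 1) (abs_of_pos h).symm
  unfold LB
  omega

lemma LB_mul_t_neg (hn : 1 ≤ n) (hw : w ∈ W n) (h : w 1 < 0) :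
    LB n (w * t) + 1 = LB n w := by
  have h1 := inv2_mul_t hn hw
  have h2 := nsum_mul_t hn hw
  have h3 := csplit hn hw (b := -(w 1)) (abs_of_neg h).symm
  simp only [neg_neg] at h3
  unfold LB
  omega

lemma LB_mul_s_asc {i : ℕ} (hi : 1 ≤ i) (hin : i < n) (h : w (i:ℤ) < w ((i:ℤ)+1)) :
    LB n (w * s i) = LB n w + 1 := by
  have h1 := inv2_mul_s (w := w) i hi hin
  have h2 := nsum_mul_s (w := w) i hi hin
  rw [if_neg (by omega), if_pos h] at h1
  unfold LB
  omega

lemma LB_mul_s_desc {i : ℕ} (hi : 1 ≤ i) (hin : i < n) (h : w ((i:ℤ)+1) < w (i:ℤ)) :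
    LB n (w * s i) + 1 = LB n w := by
  have h1 := inv2_mul_s (w := w) i hi hin
  have h2 := nsum_mul_s (w := w) i hi hin
  rw [if_pos h, if_neg (by omega)] at h1
  unfold LB
  omega

lemma exists_descent (hn : 1 ≤ n) (hw : w ∈ W n) (hne : w ≠ 1) :
    w 1 < 0 ∨ ∃ i : ℕ, 1 ≤ i ∧ i < n ∧ w ((i:ℤ)+1) < w (i:ℤ) := by
  by_contra hcon
  push_neg at hcon
  obtain ⟨h0, hasc⟩ := hcon
  have hw1 : w 1 ≠ 0 := w_ne_zero hw one_ne_zero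
  have hstrict : ∀ i : ℕ, 1 ≤ i → i < n → w (i:ℤ) < w ((i:ℤ)+1) := by
    intro i h1 h2
    have hle := hasc i h1 h2
    have hne' : w (i:ℤ) ≠ w ((i:ℤ)+1) := fun h => by
      have := w.injective h
      omega
    omega
  have hA : ∀ k : ℕ, 1 ≤ k → k ≤ n → (k:ℤ) ≤ w (k:ℤ) := by
    intro k
    induction k with
    | zero => omega
    | succ m ih =>
      intro _ hm
      rcases Nat.eq_or_lt_of_le (show 1 ≤ m + 1 from by omega) with h | h
      · have : m = 0 := by omega
        subst this
        push_cast
        omega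
      · have hm1 : 1 ≤ m := by omega
        have hmn : m < n := by omega
        have h1 := ih hm1 (by omega)
        have h2 := hstrict m hm1 hmn
        push_cast at h2 ⊢
        omega
  have hB : ∀ d k : ℕ, 1 ≤ k → k ≤ n → n ≤ k + d → w (k:ℤ) = (k:ℤ) := by
    intro d
    induction d with
    | zero =>
      intro k h1 h2 h3
      have hk : k = n := by omega
      subst hk
      have ha := hA k (by omega) (by omega)
      have habs := w_abs_le hw (k := (k:ℤ))
        (by have : |((k:ℕ):ℤ)| = (k:ℤ) := abs_of_pos (by exact_mod_cast h1); omega)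
      rcases abs_cases (w (k:ℤ)) with ⟨h,_⟩|⟨h,_⟩ <;> omega
    | succ d ih =>
      intro k h1 h2 h3
      by_cases hcase : n ≤ k + d
      · exact ih k h1 h2 hcase
      · have hkn : k < n := by omega
        have hnext : w ((k:ℤ)+1) = (k:ℤ)+1 := by
          have := ih (k+1) (by omega) (by omega) (by omega)
          push_cast at this
          omega
        have hs := hstrict k h1 hkn
        have ha := hA k h1 (by omega)
        omega
  have hfix : ∀ k : ℕ, 1 ≤ k → k ≤ n → w (k:ℤ) = (k:ℤ) :=
    fun k h1 h2 => hB (n - k) k h1 h2 (by omega)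
  apply hne
  ext k
  simp only [Equiv.Perm.one_apply]
  rcases le_or_gt k (-(n:ℤ)) with hk | hk
  · rcases eq_or_lt_of_le hk with hk' | hk'
    · -- k = -n or k < -n handled below together; use oddness for in-range
      have hkb : 1 ≤ -k ∧ -k ≤ (n:ℤ) := by omega
      have hpos := hfix (-k).toNat (by omega) (by omega)
      have hcast : (((-k).toNat : ℕ) : ℤ) = -k := by omega
      rw [hcast] at hpos
      have hodd := hw.1 (-k)
      rw [neg_neg] at hodd
      omega
    · exact hw.2 k (by rw [lt_abs]; omega)
  · rcases le_or_gt k (-1) with hk2 | hk2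
    · have hpos := hfix (-k).toNat (by omega) (by omega)
      have hcast : (((-k).toNat : ℕ) : ℤ) = -k := by omega
      rw [hcast] at hpos
      have hodd := hw.1 (-k)
      rw [neg_neg] at hodd
      omega
    · rcases lt_trichotomy k 0 with h | h | h
      · omega
      · subst h
        exact w_zero hw
      · rcases le_or_gt k n with hk3 | hk3
        · have hpos := hfix k.toNat (by omega) (by omega)
          have hcast : ((k.toNat : ℕ) : ℤ) = k := by omega
          rw [hcast] at hpos
          exact hpos
        · exact hw.2 k (by rw [lt_abs]; omega)

lemma prod_gens_mem (hn : 1 ≤ n) (l : List (Equiv.Perm ℤ)) (hl : ∀ g ∈ l, g ∈ gens n) :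
    l.prod ∈ W n :=
  Subgroup.list_prod_mem _ fun g hg => gens_subset_W n hn (hl g hg)

lemma LB_mul_gen_le (hn : 1 ≤ n) (hw : w ∈ W n) {g : Equiv.Perm ℤ} (hg : g ∈ gens n) :
    LB n (w * g) ≤ LB n w + 1 := by
  rcases hg with hg | ⟨i, hi1, hi2, rfl⟩
  · rcases hg with rfl
    have hne : w 1 ≠ 0 := w_ne_zero hw one_ne_zero
    rcases lt_or_gt_of_ne hne with h | h
    · have := LB_mul_t_neg hn hw h
      omega
    · have := LB_mul_t_pos hn hw h
      omega
  · have hne : w (i:ℤ) ≠ w ((i:ℤ)+1) := fun h => by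
      have := w.injective h
      omega
    rcases lt_or_gt_of_ne hne with h | h
    · have := LB_mul_s_asc hi1 hi2 h
      omega
    · have := LB_mul_s_desc hi1 hi2 h
      omega

lemma LB_le_length (hn : 1 ≤ n) :
    ∀ l : List (Equiv.Perm ℤ), (∀ g ∈ l, g ∈ gens n) → LB n l.prod ≤ l.length := by
  intro l
  induction l using List.reverseRecOn with
  | nil =>
    intro _
    simp only [List.prod_nil, List.length_nil, LB_one]
    exact le_refl 0
  | append_singleton l g ih =>
    intro hall
    have h1 : ∀ x ∈ l, x ∈ gens n := fun x hx => hall x (List.mem_append_left _ hx)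
    have hg : g ∈ gens n := hall g (by simp)
    rw [List.prod_append, List.prod_singleton, List.length_append]
    have step := LB_mul_gen_le hn (prod_gens_mem hn l h1) hg
    have := ih h1
    simp only [List.length_singleton]
    omega

lemma exists_word (hn : 1 ≤ n) : ∀ k : ℕ, ∀ w : Equiv.Perm ℤ, w ∈ W n → LB n w = k →
    ∃ l : List (Equiv.Perm ℤ), (∀ g ∈ l, g ∈ gens n) ∧ l.prod = w ∧ l.length = k := by
  intro k
  induction k using Nat.strong_induction_on with
  | _ k ih =>
    intro w hw hk
    by_cases hone : w = 1
    · subst hone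
      exact ⟨[], by simp, by simp, by rw [← hk, LB_one]; rfl⟩
    · rcases exists_descent hn hw hone with h | ⟨i, hi1, hi2, h⟩
      · have hd := LB_mul_t_neg hn hw h
        have hmem : w * t ∈ W n := (W n).mul_mem hw (t_mem n hn)
        obtain ⟨l, hl1, hl2, hl3⟩ := ih (LB n (w * t)) (by omega) (w * t) hmem rfl
        refine ⟨l ++ [t], ?_, ?_, ?_⟩
        · intro g hg
          rcases List.mem_append.1 hg with h' | h'
          · exact hl1 g h'
          · simp only [List.mem_singleton] at h'
            subst h'
            exact Or.inl rfl
        · rw [List.prod_append, List.prod_singleton, hl2, mul_assoc, t_sq, mul_one]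
        · rw [List.length_append, hl3]
          simp only [List.length_singleton]
          omega
      · have hd := LB_mul_s_desc hi1 hi2 h
        have hmem : w * s i ∈ W n := (W n).mul_mem hw (s_mem n i hi1 hi2)
        obtain ⟨l, hl1, hl2, hl3⟩ := ih (LB n (w * s i)) (by omega) (w * s i) hmem rfl
        refine ⟨l ++ [s i], ?_, ?_, ?_⟩
        · intro g hg
          rcases List.mem_append.1 hg with h' | h'
          · exact hl1 g h'
          · simp only [List.mem_singleton] at h'
            subst h'
            exact Or.inr ⟨i, hi1, hi2, rfl⟩
        · rw [List.prod_append, List.prod_singleton, hl2, mul_assoc, s_sq i hi1, mul_one]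
        · rw [List.length_append, hl3]
          simp only [List.length_singleton]
          omega

lemma len_eq_LB (hn : 1 ≤ n) (hw : w ∈ W n) : len n w = LB n w := by
  obtain ⟨l, hl1, hl2, hl3⟩ := exists_word hn (LB n w) w hw rfl
  apply le_antisymm
  · exact Nat.sInf_le ⟨l, hl1, hl2, hl3⟩
  · obtain ⟨l', h1', h2', h3'⟩ := Nat.sInf_mem (s :=
      {k | ∃ l : List (Equiv.Perm ℤ), (∀ x ∈ l, x ∈ gens n) ∧ l.prod = w ∧ l.length = k})
      ⟨LB n w, l, hl1, hl2, hl3⟩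
    calc LB n w = LB n l'.prod := by rw [h2']
    _ ≤ l'.length := LB_le_length hn l' h1'
    _ = len n w := h3'

end Aux

/-- for `0 ≤ ρ ≤ n-2` and `u ∈ E_n^{(ρ)}`, writing `u = x v` with
`x ∈ X_n^{(ρ+2)}` and `v ∈ W_{ρ+2}`, one has `v ∈ E_{ρ+2}^{(ρ)}`. -/
theorem stmt18 (n ρ : ℕ) (hρ : ρ + 2 ≤ n) (u : Equiv.Perm ℤ) (hu : u ∈ E n ρ)
    (x v : Equiv.Perm ℤ) (hx : x ∈ X n (ρ + 2)) (hv : v ∈ W (ρ + 2))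
    (huxv : u = x * v) :
    v ∈ E (ρ + 2) ρ := by
  obtain ⟨hxW, hxmin⟩ := hx
  have hn1 : 1 ≤ n := by omega
  set m : ℕ := ρ + 2 with hm
  have hmZ : (m:ℤ) = (ρ:ℤ) + 2 := by push_cast [hm]; ring
  -- minimality in terms of the statistic LB
  have hmin' : ∀ g ∈ W m, LB n x ≤ LB n (x * g) := by
    intro g hg
    have hgWn : g ∈ W n := W_le hρ hg
    have hh := hxmin g hg
    rwa [len_eq_LB hn1 hxW, len_eq_LB hn1 ((W n).mul_mem hxW hgWn)] at hh
  -- x is positive and increasing on [1, m]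
  have hx1 : 0 < x 1 := by
    rcases lt_or_gt_of_ne (w_ne_zero hxW one_ne_zero) with h | h
    · exfalso
      have h1 := LB_mul_t_neg hn1 hxW h
      have h2 := hmin' t (t_mem m (by omega))
      omega
    · exact h
  have hadj : ∀ i : ℕ, 1 ≤ i → i < m → x (i:ℤ) < x ((i:ℤ)+1) := by
    intro i h1 h2
    have hne : x (i:ℤ) ≠ x ((i:ℤ)+1) := fun h => by
      have := x.injective h
      omega
    rcases lt_or_gt_of_ne hne with h | h
    · exact h
    · exfalso
      have hd := LB_mul_s_desc (n := n) (w := x) h1 (by omega) h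
      have h2 := hmin' (s i) (s_mem m i h1 h2)
      omega
  have hadjZ : ∀ k : ℤ, 1 ≤ k → k < m → x k < x (k+1) := by
    intro k h1 h2
    have hh := hadj k.toNat (by omega) (by omega)
    have e : ((k.toNat : ℕ) : ℤ) = k := by omega
    rwa [e] at hh
  have hmonoAux : ∀ d : ℕ, ∀ j : ℤ, 1 ≤ j → j + d + 1 ≤ m → x j < x (j + d + 1) := by
    intro d
    induction d with
    | zero =>
      intro j h1 h2
      have := hadjZ j h1 (by omega)
      simpa using this
    | succ d ih =>
      intro j h1 h2
      have h3 := ih j h1 (by omega)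
      have h4 := hadjZ (j + d + 1) (by omega) (by omega)
      have e : j + (d:ℤ) + 1 + 1 = j + ((d:ℕ)+1:ℕ) + 1 := by push_cast; ring
      rw [e] at h4
      exact lt_trans h3 h4
  have hmono : ∀ j k : ℤ, 1 ≤ j → j < k → k ≤ m → x j < x k := by
    intro j k h1 h2 h3
    have hh := hmonoAux (k - j - 1).toNat j h1 (by omega)
    have e : j + ((k - j - 1).toNat : ℤ) + 1 = k := by omega
    rwa [e] at hh
  have hposx : ∀ k : ℤ, 1 ≤ k → k ≤ m → 0 < x k := by
    intro k h1 h2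
    rcases eq_or_lt_of_le h1 with h | h
    · rw [← h]; exact hx1
    · exact lt_trans hx1 (hmono 1 k le_rfl h h2)
  have hnegx : ∀ k : ℤ, 1 ≤ -k → -k ≤ m → x k < 0 := by
    intro k h1 h2
    have hodd := hxW.1 (-k)
    rw [neg_neg] at hodd
    have := hposx (-k) h1 h2
    omega
  -- order and sign transfer
  have hord : ∀ j k : ℤ, 1 ≤ |j| → |j| ≤ m → 1 ≤ |k| → |k| ≤ m → j < k → x j < x k := by
    intro j k hj1 hj2 hk1 hk2 hjk
    rcases abs_cases j with ⟨ej, hj0⟩ | ⟨ej, hj0⟩ <;> rcases abs_cases k with ⟨ek, hk0⟩ | ⟨ek, hk0⟩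
    · exact hmono j k (by omega) hjk (by omega)
    · omega
    · -- j < 0, k > 0
      have h1 := hnegx j (by omega) (by omega)
      have h2 := hposx k (by omega) (by omega)
      omega
    · -- both negative
      have hoddj := hxW.1 (-j)
      have hoddk := hxW.1 (-k)
      rw [neg_neg] at hoddj hoddk
      have := hmono (-k) (-j) (by omega) (by omega) (by omega)
      omega
  have hordIff : ∀ j k : ℤ, 1 ≤ |j| → |j| ≤ m → 1 ≤ |k| → |k| ≤ m → (x j < x k ↔ j < k) := by
    intro j k hj1 hj2 hk1 hk2
    constructor
    · intro h
      rcases lt_trichotomy j k with h' | h' | h'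
      · exact h'
      · exfalso; rw [h'] at h; exact lt_irrefl _ h
      · exfalso; exact lt_asymm h (hord k j hk1 hk2 hj1 hj2 h')
    · exact hord j k hj1 hj2 hk1 hk2
  have habsx : ∀ j : ℤ, 1 ≤ |j| → |j| ≤ m → |x j| = x |j| := by
    intro j h1 h2
    rcases abs_cases j with ⟨ej, hj0⟩ | ⟨ej, hj0⟩
    · rw [ej]
      exact abs_of_pos (hposx j (by omega) (by omega))
    · rw [ej]
      have hodd := hxW.1 (-j)
      rw [neg_neg] at hodd
      have := hposx (-j) (by omega) (by omega)
      have hneg := hnegx j (by omega) (by omega)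
      rcases abs_cases (x j) with ⟨h,_⟩|⟨h,_⟩ <;> omega
  have habsIff : ∀ j k : ℤ, 1 ≤ |j| → |j| ≤ m → 1 ≤ |k| → |k| ≤ m →
      (|x j| < |x k| ↔ |j| < |k|) := by
    intro j k hj1 hj2 hk1 hk2
    rw [habsx j hj1 hj2, habsx k hk1 hk2]
    have := hordIff |j| |k| (by rw [abs_abs]; exact hj1) (by rw [abs_abs]; exact hj2)
      (by rw [abs_abs]; exact hk1) (by rw [abs_abs]; exact hk2)
    exact this
  -- facts about v
  have hvbound : ∀ k : ℤ, 1 ≤ k → k ≤ m → 1 ≤ |v k| ∧ |v k| ≤ (m:ℤ) := by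
    intro k h1 h2
    have hzk : v k ≠ 0 := w_ne_zero hv (by omega)
    have habk : |v k| ≤ (m:ℤ) := w_abs_le hv (by
      have : |k| = k := abs_of_pos (by omega)
      omega)
    constructor
    · rcases abs_cases (v k) with ⟨h,_⟩|⟨h,_⟩ <;> omega
    · exact habk
  have huapp : ∀ k : ℤ, u k = x (v k) := by
    intro k
    rw [huxv]
    rfl
  obtain ⟨huW, hu2, hu3⟩ := hu
  refine ⟨hv, ?_, ?_⟩
  · intro i h2i him
    have hvi := hvbound (i:ℤ) (by exact_mod_cast Nat.one_le_of_lt h2i) (by exact_mod_cast him)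
    have hv1 := hvbound 1 le_rfl (by omega)
    have hui := hu2 i h2i him
    rw [huapp (i:ℤ), huapp 1] at hui
    exact (habsIff (v (i:ℤ)) (v 1) hvi.1 hvi.2 hv1.1 hv1.2).1 hui
  · intro i j h2i hij hjm
    have hiρ : i ≤ ρ + 2 := by omega
    have hvi := hvbound (i:ℤ) (by exact_mod_cast Nat.one_le_of_lt h2i) (by exact_mod_cast hiρ)
    have hvj := hvbound (j:ℤ) (by exact_mod_cast (by omega : 1 ≤ j)) (by exact_mod_cast hjm)
    have hcond := hu3 i j h2i hij hjm
    constructor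
    · intro hpi hpj
      have hxi : 0 < u (i:ℤ) := by
        rw [huapp]
        exact hposx (v (i:ℤ)) (by omega) (by
          rcases abs_cases (v (i:ℤ)) with ⟨h,_⟩|⟨h,_⟩ <;> omega)
      have hxj : 0 < u (j:ℤ) := by
        rw [huapp]
        exact hposx (v (j:ℤ)) (by omega) (by
          rcases abs_cases (v (j:ℤ)) with ⟨h,_⟩|⟨h,_⟩ <;> omega)
      have := hcond.1 hxi hxj
      rw [huapp (i:ℤ), huapp (j:ℤ)] at this
      exact (hordIff (v (j:ℤ)) (v (i:ℤ)) hvj.1 hvj.2 hvi.1 hvi.2).1 this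
    · intro hpi hpj
      have hxi : u (i:ℤ) < 0 := by
        rw [huapp]
        exact hnegx (v (i:ℤ)) (by omega) (by
          rcases abs_cases (v (i:ℤ)) with ⟨h,_⟩|⟨h,_⟩ <;> omega)
      have hxj : u (j:ℤ) < 0 := by
        rw [huapp]
        exact hnegx (v (j:ℤ)) (by omega) (by
          rcases abs_cases (v (j:ℤ)) with ⟨h,_⟩|⟨h,_⟩ <;> omega)
      have := hcond.2 hxi hxj
      rw [huapp (i:ℤ), huapp (j:ℤ)] at this
      exact (hordIff (v (i:ℤ)) (v (j:ℤ)) hvi.1 hvi.2 hvj.1 hvj.2).1 this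

end TypeB
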